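/- Let H be an infinite-dimensional Hilbert space. Then every continuous trace on B(H) is zero: if f is a bounded linear functional on the Banach algebra B(H) of all bounded operators on H with f(ab) = f(ba) for all a,b ∈ B(H), then f = 0. -/
import Mathlib

/-!
STATEMENT 11: Every continuous trace on `B(H)`, for `H` an infinite-dimensional
Hilbert space, is zero.
-/

section Aux

local notation "⟪" x ", " y "⟫" => @inner ℂ _ _ x y

variable {H : Type*} [NormedAddCommGroup H] [InnerProductSpace ℂ H] [CompleteSpace H]

lemma isoOfOrthonormal {ι : Type*} (b : HilbertBasis ι ℂ H) {c : ι → H} (hc : Orthonormal ℂ c) :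
    ∃ V : H →ₗᵢ[ℂ] H, ∀ u : H, HasSum (fun i => (b.repr u i : ℂ) • c i) (V u) := by
  refine ⟨(hc.orthogonalFamily.linearIsometry).comp b.repr.toLinearIsometry, fun u => ?_⟩
  have := hc.orthogonalFamily.hasSum_linearIsometry (b.repr u)
  simpa [LinearIsometry.toSpanSingleton_apply] using this

omit [CompleteSpace H] in
lemma inner_iso_zero {ι : Type*} {c d : ι → H} {V W : H →ₗᵢ[ℂ] H}
    {xc : H → ι → ℂ} {xd : H → ι → ℂ}
    (hV : ∀ u : H, HasSum (fun i => xc u i • c i) (V u))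
    (hW : ∀ u : H, HasSum (fun i => xd u i • d i) (W u))
    (hcd : ∀ i j, ⟪c i, d j⟫ = 0) (u w : H) :
    ⟪V u, W w⟫ = 0 := by
  have h1 : ∀ j, ⟪V u, d j⟫ = 0 := by
    intro j
    rw [← inner_conj_symm]
    have := (hV u).mapL (innerSL ℂ (d j))
    have hz : (fun i => (innerSL ℂ (d j)) (xc u i • c i)) = fun _ => (0 : ℂ) := by
      funext i
      have : ⟪d j, c i⟫ = 0 := by rw [← inner_conj_symm, hcd i j]; simp
      simp [inner_smul_right, this]
    rw [hz] at this
    have h0 : ⟪d j, V u⟫ = 0 := this.unique hasSum_zero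
    rw [h0]; simp
  have := (hW w).mapL (innerSL ℂ (V u))
  have hz : (fun j => (innerSL ℂ (V u)) (xd w j • d j)) = fun _ => (0 : ℂ) := by
    funext j; simp [inner_smul_right, h1 j]
  rw [hz] at this
  exact this.unique hasSum_zero

lemma exists_two_isometries (hinf : ¬ FiniteDimensional ℂ H) :
    ∃ v₀ v₁ : H →L[ℂ] H,
      (∀ x y : H, ⟪v₀ x, v₀ y⟫ = ⟪x, y⟫) ∧
      (∀ x y : H, ⟪v₁ x, v₁ y⟫ = ⟪x, y⟫) ∧
      (∀ x y : H, ⟪v₀ x, v₁ y⟫ = 0) := by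
  obtain ⟨w, b, -⟩ := exists_hilbertBasis ℂ H
  set ι := ↥w with hι
  haveI hinfι : Infinite ι := by
    rw [← not_finite_iff_infinite]
    intro hfin
    apply hinf
    set S := Submodule.span ℂ (Set.range (b : ι → H)) with hS
    haveI : FiniteDimensional ℂ S := FiniteDimensional.span_of_finite ℂ (Set.finite_range _)
    have hcl : IsClosed (S : Set H) := S.closed_of_finiteDimensional
    have htop : S = ⊤ := by
      have hd := b.dense_span
      rwa [IsClosed.submodule_topologicalClosure_eq hcl] at hd
    exact Module.Finite.equiv (LinearEquiv.ofTop S htop)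
  obtain ⟨e⟩ : Nonempty ((ι ⊕ ι) ≃ ι) := by
    apply Cardinal.eq.1
    simp [Cardinal.mk_sum, Cardinal.add_eq_self (Cardinal.aleph0_le_mk ι)]
  set c₀ : ι → H := fun i => b (e (Sum.inl i)) with hc₀
  set c₁ : ι → H := fun i => b (e (Sum.inr i)) with hc₁
  have hoc₀ : Orthonormal ℂ c₀ :=
    b.orthonormal.comp _ (e.injective.comp Sum.inl_injective)
  have hoc₁ : Orthonormal ℂ c₁ :=
    b.orthonormal.comp _ (e.injective.comp Sum.inr_injective)
  have hcd : ∀ i j, ⟪c₀ i, c₁ j⟫ = 0 := by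
    intro i j
    exact b.orthonormal.2 (by simp [e.injective.ne_iff])
  obtain ⟨V₀, hV₀⟩ := isoOfOrthonormal b hoc₀
  obtain ⟨V₁, hV₁⟩ := isoOfOrthonormal b hoc₁
  exact ⟨V₀.toContinuousLinearMap, V₁.toContinuousLinearMap,
    fun x y => V₀.inner_map_map x y, fun x y => V₁.inner_map_map x y,
    fun x y => inner_iso_zero hV₀ hV₁ hcd x y⟩


set_option maxHeartbeats 1000000 in
open ContinuousLinearMap in
lemma trace_zero_of_two_isometries
    {H : Type*} [NormedAddCommGroup H] [InnerProductSpace ℂ H] [CompleteSpace H]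
    (f : (H →L[ℂ] H) →L[ℂ] ℂ)
    (htr : ∀ a b : H →L[ℂ] H, f (a * b) = f (b * a))
    (v₀ v₁ : H →L[ℂ] H)
    (h₀ : ∀ x y : H, ⟪v₀ x, v₀ y⟫ = ⟪x, y⟫)
    (h₁ : ∀ x y : H, ⟪v₁ x, v₁ y⟫ = ⟪x, y⟫)
    (h01 : ∀ x y : H, ⟪v₀ x, v₁ y⟫ = 0) :
    f = 0 := by
  set w₀ := ContinuousLinearMap.adjoint v₀ with hw₀
  set w₁ := ContinuousLinearMap.adjoint v₁ with hw₁
  -- isometries preserve norm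
  have hn₀ : ∀ x : H, ‖v₀ x‖ = ‖x‖ := fun x =>
    ((v₀ : H →ₗ[ℂ] H).isometryOfInner h₀).norm_map x
  have hn₁ : ∀ x : H, ‖v₁ x‖ = ‖x‖ := fun x =>
    ((v₁ : H →ₗ[ℂ] H).isometryOfInner h₁).norm_map x
  -- w ∘ v = 1
  have hwv₀ : w₀ * v₀ = 1 := by
    ext x
    refine ext_inner_right ℂ fun y => ?_
    rw [hw₀]
    show ⟪(ContinuousLinearMap.adjoint v₀) (v₀ x), y⟫ = ⟪(1 : H →L[ℂ] H) x, y⟫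
    rw [adjoint_inner_left, h₀]
    rfl
  have hwv₁ : w₁ * v₁ = 1 := by
    ext x
    refine ext_inner_right ℂ fun y => ?_
    rw [hw₁]
    show ⟪(ContinuousLinearMap.adjoint v₁) (v₁ x), y⟫ = ⟪(1 : H →L[ℂ] H) x, y⟫
    rw [adjoint_inner_left, h₁]
    rfl
  -- the amplification map
  set T : (H →L[ℂ] H) → (H →L[ℂ] H) := fun a => v₀ * a * w₀ + v₁ * a * w₁ with hT
  -- inner adjoint identity ⟪v (w x), x⟫ = ‖w x‖ ^ 2
  have hinner : ∀ (v : H →L[ℂ] H) (x : H),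
      ⟪v ((ContinuousLinearMap.adjoint v) x), x⟫ = (‖(ContinuousLinearMap.adjoint v) x‖ ^ 2 : ℝ) := by
    intro v x
    rw [← adjoint_inner_right v ((ContinuousLinearMap.adjoint v) x) x,
      inner_self_eq_norm_sq_to_K]
    norm_num
  -- key bound
  have hsum : ∀ x : H, ‖w₀ x‖ ^ 2 + ‖w₁ x‖ ^ 2 ≤ ‖x‖ ^ 2 := by
    intro x
    set u := v₀ (w₀ x) + v₁ (w₁ x) with hu
    set s := ‖w₀ x‖ ^ 2 + ‖w₁ x‖ ^ 2 with hs
    have hux : ⟪u, x⟫ = (s : ℝ) := by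
      rw [hu, inner_add_left, hinner v₀ x, hinner v₁ x, hs]
      push_cast; ring
    have hun : ‖u‖ ^ 2 = s := by
      rw [hu, norm_add_sq (𝕜 := ℂ), h01, hn₀, hn₁]
      simp [hs]
    have hre : s ≤ ‖u‖ * ‖x‖ := by
      have := re_inner_le_norm (𝕜 := ℂ) u x
      rw [hux] at this
      simpa using this
    nlinarith [norm_nonneg u, norm_nonneg x, sq_nonneg (‖u‖ - ‖x‖)]
  have hTnorm : ∀ a : H →L[ℂ] H, ‖T a‖ ≤ ‖a‖ := by
    intro a
    refine ContinuousLinearMap.opNorm_le_bound _ (norm_nonneg a) fun x => ?_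
    have hx : ‖T a x‖ ^ 2 ≤ (‖a‖ * ‖x‖) ^ 2 := by
      have hTx : T a x = v₀ (a (w₀ x)) + v₁ (a (w₁ x)) := rfl
      have horth : ⟪v₀ (a (w₀ x)), v₁ (a (w₁ x))⟫ = 0 := h01 _ _
      have : ‖T a x‖ ^ 2 = ‖a (w₀ x)‖ ^ 2 + ‖a (w₁ x)‖ ^ 2 := by
        rw [hTx, norm_add_sq (𝕜 := ℂ), horth, hn₀, hn₁]; simp
      rw [this]
      have b0 := a.le_opNorm (w₀ x)
      have b1 := a.le_opNorm (w₁ x)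
      have hs := hsum x
      have c0 : ‖a (w₀ x)‖ ^ 2 ≤ ‖a‖ ^ 2 * ‖w₀ x‖ ^ 2 := by
        nlinarith [norm_nonneg (a (w₀ x)), norm_nonneg (w₀ x), norm_nonneg a]
      have c1 : ‖a (w₁ x)‖ ^ 2 ≤ ‖a‖ ^ 2 * ‖w₁ x‖ ^ 2 := by
        nlinarith [norm_nonneg (a (w₁ x)), norm_nonneg (w₁ x), norm_nonneg a]
      have c2 : ‖a‖ ^ 2 * (‖w₀ x‖ ^ 2 + ‖w₁ x‖ ^ 2) ≤ ‖a‖ ^ 2 * ‖x‖ ^ 2 :=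
        mul_le_mul_of_nonneg_left hs (by positivity)
      nlinarith
    have h2 : (0:ℝ) ≤ ‖a‖ * ‖x‖ := mul_nonneg (norm_nonneg _) (norm_nonneg _)
    nlinarith [norm_nonneg (T a x)]
  have hTf : ∀ a : H →L[ℂ] H, f (T a) = 2 * f a := by
    intro a
    have e0 : f (v₀ * a * w₀) = f a := by
      rw [mul_assoc, htr v₀ (a * w₀), mul_assoc, hwv₀, mul_one]
    have e1 : f (v₁ * a * w₁) = f a := by
      rw [mul_assoc, htr v₁ (a * w₁), mul_assoc, hwv₁, mul_one]
    rw [hT]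
    simp only [map_add, e0, e1]
    ring
  -- induction
  have key : ∀ (n : ℕ) (a : H →L[ℂ] H), ‖f a‖ ≤ ‖f‖ * ‖a‖ / 2 ^ n := by
    intro n
    induction n with
    | zero => intro a; simpa using f.le_opNorm a
    | succ n ih =>
      intro a
      have h1 : ‖f (T a)‖ = 2 * ‖f a‖ := by
        rw [hTf a, norm_mul]; norm_num
      have h2 : ‖f (T a)‖ ≤ ‖f‖ * ‖a‖ / 2 ^ n := by
        calc ‖f (T a)‖ ≤ ‖f‖ * ‖T a‖ / 2 ^ n := ih (T a)
          _ ≤ ‖f‖ * ‖a‖ / 2 ^ n := by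
            gcongr
            exact hTnorm a
      have h3 : (2:ℝ) ^ (n+1) = 2 ^ n * 2 := by ring
      rw [h3, ← div_div]
      linarith
  ext a
  have hz : ‖f a‖ ≤ 0 := by
    have hlim : Filter.Tendsto (fun n : ℕ => ‖f‖ * ‖a‖ / 2 ^ n) Filter.atTop (nhds 0) := by
      simp_rw [div_eq_mul_inv, ← inv_pow]
      simpa using (tendsto_pow_atTop_nhds_zero_of_lt_one (by norm_num : (0:ℝ) ≤ 2⁻¹)
        (by norm_num : (2:ℝ)⁻¹ < 1)).const_mul (‖f‖ * ‖a‖)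
    exact ge_of_tendsto' hlim (fun n => key n a)
  have : f a = 0 := norm_le_zero_iff.mp hz
  simpa using this

end Aux

theorem trace_on_bounded_operators_eq_zero
    {H : Type*} [NormedAddCommGroup H] [InnerProductSpace ℂ H] [CompleteSpace H]
    (hinf : ¬ FiniteDimensional ℂ H)
    (f : (H →L[ℂ] H) →L[ℂ] ℂ)
    (htr : ∀ a b : H →L[ℂ] H, f (a * b) = f (b * a)) :
    f = 0 := by
  obtain ⟨v₀, v₁, h₀, h₁, h01⟩ := exists_two_isometries hinf
  exact trace_zero_of_two_isometries f htr v₀ v₁ h₀ h₁ h01
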